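/- arXiv:1509.07817 — 2 statements merged into one kernel-verified Lean document; each statement's English description precedes it below -/
import Mathlib

section
/- Let 0 → F → R → S → 0 be an exact sequence of abelian groups with F finite, and suppose that for some positive integer n the groups {x ∈ R : n•x = 0}, R/nR, {x ∈ S : n•x = 0}, S/nS are all finite. Then |{x∈R : n•x=0}| / |R/nR| = |{x∈S : n•x=0}| / |S/nS| · |{x∈F : n•x=0}| / |F/nF|, and |{x∈F : n•x=0}| = |F/nF|, so the ratios for R and S coincide. -/
/-- The `n`-torsion subgroup of an abelian group. -/
def nTorsion (n : ℕ) (A : Type*) [AddCommGroup A] : AddSubgroup A where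
  carrier := {x | n • x = 0}
  zero_mem' := by simp
  add_mem' := by
    intro a b ha hb
    simp only [Set.mem_setOf_eq] at *
    rw [smul_add, ha, hb, add_zero]
  neg_mem' := by
    intro a ha
    simp only [Set.mem_setOf_eq] at *
    rw [smul_neg, ha, neg_zero]

/-- The subgroup `n•A` of an abelian group `A`. -/
def smulTop (n : ℕ) (A : Type*) [AddCommGroup A] : AddSubgroup A where
  carrier := Set.range fun y : A => n • y
  zero_mem' := ⟨0, smul_zero n⟩
  add_mem' := by
    rintro _ _ ⟨a, rfl⟩ ⟨b, rfl⟩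
    exact ⟨a + b, smul_add n a b⟩
  neg_mem' := by
    rintro _ ⟨a, rfl⟩
    exact ⟨-a, smul_neg n a⟩

/-- The `ℓ`-primary component of an abelian group: elements of `ℓ`-power order. -/
def primaryPart (ℓ : ℕ) (A : Type*) [AddCommGroup A] : AddSubgroup A where
  carrier := {x | ∃ k : ℕ, ℓ ^ k • x = 0}
  zero_mem' := ⟨0, smul_zero _⟩
  add_mem' := by
    rintro a b ⟨j, hj⟩ ⟨k, hk⟩
    refine ⟨j + k, ?_⟩
    have ha : ℓ ^ (j + k) • a = 0 := by rw [add_comm, pow_add, mul_smul, hj, smul_zero]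
    have hb : ℓ ^ (j + k) • b = 0 := by rw [pow_add, mul_smul, hk, smul_zero]
    rw [smul_add, ha, hb, add_zero]
  neg_mem' := by
    rintro a ⟨k, hk⟩
    exact ⟨k, by rw [smul_neg, hk, neg_zero]⟩

/-- The group `ℚ/ℤ`. -/
abbrev QZ : Type := ℚ ⧸ AddSubgroup.zmultiples (1 : ℚ)

/-- The Prüfer `ℓ`-group `ℚ_ℓ/ℤ_ℓ`, realized as the `ℓ`-primary part of `ℚ/ℤ`. -/
abbrev Prufer (ℓ : ℕ) : Type := ↥(primaryPart ℓ QZ)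

/-- The maximal divisible subgroup of an abelian group. -/
def divisiblePart (A : Type*) [AddCommGroup A] : AddSubgroup A :=
  sSup {H : AddSubgroup A | ∀ n : ℕ, 0 < n → ∀ x ∈ H, ∃ y ∈ H, n • y = x}

/-- The torsion subgroup of an abelian group. -/
def torsionSub (A : Type*) [AddCommGroup A] : AddSubgroup A where
  carrier := {x | ∃ n : ℕ, 0 < n ∧ n • x = 0}
  zero_mem' := ⟨1, one_pos, smul_zero 1⟩
  add_mem' := by
    rintro a b ⟨j, hj, hja⟩ ⟨k, hk, hkb⟩
    refine ⟨j * k, Nat.mul_pos hj hk, ?_⟩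
    have ha : (j * k) • a = 0 := by rw [mul_comm, mul_smul, hja, smul_zero]
    have hb : (j * k) • b = 0 := by rw [mul_smul, hkb, smul_zero]
    rw [smul_add, ha, hb, add_zero]
  neg_mem' := by
    rintro a ⟨k, hk, hka⟩
    exact ⟨k, hk, by rw [smul_neg, hka, neg_zero]⟩

section SnakeAux

lemma mem_smulTop_iff {n : ℕ} {A : Type*} [AddCommGroup A] {x : A} :
    x ∈ smulTop n A ↔ ∃ y, n • y = x := Iff.rfl

lemma mem_nTorsion_iff {n : ℕ} {A : Type*} [AddCommGroup A] {x : A} :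
    x ∈ nTorsion n A ↔ n • x = 0 := Iff.rfl

/-- Counting: `|G| = |range h| * |ker h|`. -/
lemma card_eq_range_mul_ker {G H : Type*} [AddCommGroup G] [AddCommGroup H] (h : G →+ H) :
    Nat.card G = Nat.card h.range * Nat.card h.ker := by
  rw [AddSubgroup.card_eq_card_quotient_mul_card_addSubgroup h.ker]
  congr 1
  exact Nat.card_congr (QuotientAddGroup.quotientKerEquivRange h).toEquiv

/-- The map induced on `n`-torsion subgroups. -/
def tmap {A B : Type*} [AddCommGroup A] [AddCommGroup B] (n : ℕ) (h : A →+ B) :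
    nTorsion n A →+ nTorsion n B where
  toFun x := ⟨h x.1, by
    show n • h x.1 = 0
    rw [← map_nsmul, show n • x.1 = 0 from x.2, map_zero]⟩
  map_zero' := by ext; simp
  map_add' a b := by ext; simp

/-- The map induced on mod-`n` quotients. -/
def qmap {A B : Type*} [AddCommGroup A] [AddCommGroup B] (n : ℕ) (h : A →+ B) :
    A ⧸ smulTop n A →+ B ⧸ smulTop n B :=
  QuotientAddGroup.map _ _ h (by
    rintro x ⟨y, rfl⟩
    exact ⟨h y, (map_nsmul h n y).symm⟩)

variable {F R S : Type} [AddCommGroup F] [AddCommGroup R] [AddCommGroup S]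
variable (f : F →+ R) (g : R →+ S) (n : ℕ)

lemma snake_key (hf : Function.Injective f) (hex : f.range = g.ker)
    {r r' : R} {x x' : F} (hgr : g r = g r')
    (hx : f x = n • r) (hx' : f x' = n • r') : x - x' ∈ smulTop n F := by
  have hk : r - r' ∈ g.ker := by rw [AddMonoidHom.mem_ker, map_sub, hgr, sub_self]
  rw [← hex] at hk
  obtain ⟨w, hw⟩ := hk
  refine ⟨w, hf ?_⟩
  rw [map_nsmul, hw, map_sub, hx, hx', smul_sub]

/-- The connecting map of the snake lemma. -/
noncomputable def snakeδ (hex : f.range = g.ker) (hg : Function.Surjective g) :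
    nTorsion n S → F ⧸ smulTop n F := fun s =>
  QuotientAddGroup.mk (show n • (hg s.1).choose ∈ f.range by
    rw [hex, AddMonoidHom.mem_ker, map_nsmul, (hg s.1).choose_spec]
    exact s.2).choose

lemma snakeδ_spec (hf : Function.Injective f) (hex : f.range = g.ker)
    (hg : Function.Surjective g) (s : nTorsion n S) {r : R} {x : F}
    (hr : g r = s.1) (hx : f x = n • r) :
    snakeδ f g n hex hg s = QuotientAddGroup.mk x := by
  have h1 : g (hg s.1).choose = s.1 := (hg s.1).choose_spec
  have hmem : n • (hg s.1).choose ∈ f.range := by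
    rw [hex, AddMonoidHom.mem_ker, map_nsmul, h1]
    exact s.2
  have h2 : f hmem.choose = n • (hg s.1).choose := hmem.choose_spec
  show QuotientAddGroup.mk hmem.choose = QuotientAddGroup.mk x
  rw [QuotientAddGroup.eq, neg_add_eq_sub]
  have hk := snake_key f g n hf hex (show g (hg s.1).choose = g r by rw [h1, hr]) h2 hx
  simpa [neg_sub] using (smulTop n F).neg_mem hk

/-- The connecting homomorphism of the snake lemma. -/
noncomputable def snakeδHom (hf : Function.Injective f) (hex : f.range = g.ker)
    (hg : Function.Surjective g) : nTorsion n S →+ F ⧸ smulTop n F where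
  toFun := snakeδ f g n hex hg
  map_zero' := by
    have := snakeδ_spec f g n hf hex hg 0 (r := 0) (x := 0) (by simp) (by simp)
    simpa using this
  map_add' a b := by
    show snakeδ f g n hex hg (a + b) = snakeδ f g n hex hg a + snakeδ f g n hex hg b
    obtain ⟨ra, hra⟩ := hg a.1
    obtain ⟨rb, hrb⟩ := hg b.1
    have hma : n • ra ∈ f.range := by
      rw [hex, AddMonoidHom.mem_ker, map_nsmul, hra]; exact a.2
    have hmb : n • rb ∈ f.range := by
      rw [hex, AddMonoidHom.mem_ker, map_nsmul, hrb]; exact b.2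
    obtain ⟨xa, hxa⟩ := hma
    obtain ⟨xb, hxb⟩ := hmb
    have hab : snakeδ f g n hex hg (a + b) = QuotientAddGroup.mk (xa + xb) := by
      refine snakeδ_spec f g n hf hex hg (a + b) (r := ra + rb) ?_ ?_
      · rw [map_add, hra, hrb]; rfl
      · rw [map_add, hxa, hxb, smul_add]
    rw [hab, snakeδ_spec f g n hf hex hg a hra hxa,
      snakeδ_spec f g n hf hex hg b hrb hxb]
    rfl

end SnakeAux

section SnakeExact

variable {F R S : Type} [AddCommGroup F] [AddCommGroup R] [AddCommGroup S]
variable (f : F →+ R) (g : R →+ S) (n : ℕ)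

lemma snakeE1 (hf : Function.Injective f) : (tmap n f).ker = ⊥ := by
  ext x
  simp only [AddMonoidHom.mem_ker, AddSubgroup.mem_bot]
  constructor
  · intro h
    have h1 : f x.1 = 0 := congrArg Subtype.val h
    exact Subtype.ext (hf (by simp [h1]))
  · rintro rfl
    exact map_zero _

lemma snakeE2 (hf : Function.Injective f) (hex : f.range = g.ker) :
    (tmap n g).ker = (tmap n f).range := by
  ext x
  simp only [AddMonoidHom.mem_ker, AddMonoidHom.mem_range]
  constructor
  · intro h
    have h1 : g x.1 = 0 := congrArg Subtype.val h
    have : x.1 ∈ f.range := by rw [hex]; exact h1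
    obtain ⟨w, hw⟩ := this
    have hw2 : n • w = 0 := by
      apply hf
      rw [map_nsmul, hw, show n • x.1 = 0 from x.2, map_zero]
    exact ⟨⟨w, hw2⟩, Subtype.ext hw⟩
  · rintro ⟨w, rfl⟩
    have : f w.1 ∈ g.ker := by rw [← hex]; exact ⟨w.1, rfl⟩
    exact Subtype.ext this

lemma snakeE3 (hf : Function.Injective f) (hex : f.range = g.ker)
    (hg : Function.Surjective g) :
    (snakeδHom f g n hf hex hg).ker = (tmap n g).range := by
  ext s
  simp only [AddMonoidHom.mem_ker, AddMonoidHom.mem_range]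
  constructor
  · intro h
    obtain ⟨r, hr⟩ := hg s.1
    have hmem : n • r ∈ f.range := by
      rw [hex, AddMonoidHom.mem_ker, map_nsmul, hr]; exact s.2
    obtain ⟨x, hx⟩ := hmem
    have hδ : snakeδHom f g n hf hex hg s = QuotientAddGroup.mk x :=
      snakeδ_spec f g n hf hex hg s hr hx
    rw [h] at hδ
    have : x ∈ smulTop n F := by
      rw [← QuotientAddGroup.eq_zero_iff, ← hδ]
    obtain ⟨y, hy⟩ := this
    beta_reduce at hy
    have htor : n • (r - f y) = 0 := by
      rw [smul_sub, ← map_nsmul, hy, hx, sub_self]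
    refine ⟨⟨r - f y, htor⟩, Subtype.ext ?_⟩
    show g (r - f y) = s.1
    have hfy : g (f y) = 0 := by
      have : f y ∈ g.ker := by rw [← hex]; exact ⟨y, rfl⟩
      exact this
    rw [map_sub, hfy, sub_zero, hr]
  · rintro ⟨r, rfl⟩
    have h0 : f (0 : F) = n • r.1 := by rw [map_zero, show n • r.1 = 0 from r.2]
    have hsp := snakeδ_spec f g n hf hex hg (tmap n g r) (r := r.1) (x := 0) rfl h0
    show snakeδ f g n hex hg (tmap n g r) = 0
    rw [hsp]
    rfl

lemma snakeE4 (hf : Function.Injective f) (hex : f.range = g.ker)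
    (hg : Function.Surjective g) :
    (qmap n f).ker = (snakeδHom f g n hf hex hg).range := by
  ext q
  refine QuotientAddGroup.induction_on q ?_
  intro x
  simp only [AddMonoidHom.mem_ker, AddMonoidHom.mem_range]
  constructor
  · intro h
    have hmk : qmap n f (QuotientAddGroup.mk x) = QuotientAddGroup.mk (f x) := rfl
    have : f x ∈ smulTop n R := by
      rw [← QuotientAddGroup.eq_zero_iff, ← hmk, h]
    obtain ⟨r, hr⟩ := this
    beta_reduce at hr
    have hs : n • g r = 0 := by
      rw [← map_nsmul, hr]
      have : f x ∈ g.ker := by rw [← hex]; exact ⟨x, rfl⟩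
      exact this
    exact ⟨⟨g r, hs⟩, snakeδ_spec f g n hf hex hg _ rfl hr.symm⟩
  · rintro ⟨s, hs⟩
    obtain ⟨r, hr⟩ := hg s.1
    have hmem : n • r ∈ f.range := by
      rw [hex, AddMonoidHom.mem_ker, map_nsmul, hr]; exact s.2
    obtain ⟨x0, hx0⟩ := hmem
    have hδ : snakeδHom f g n hf hex hg s = QuotientAddGroup.mk x0 :=
      snakeδ_spec f g n hf hex hg s hr hx0
    rw [hδ] at hs
    rw [QuotientAddGroup.eq] at hs
    obtain ⟨y, hy⟩ := hs
    beta_reduce at hy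
    show qmap n f (QuotientAddGroup.mk x) = 0
    have : f x ∈ smulTop n R := by
      refine ⟨r + f y, show n • (r + f y) = f x from ?_⟩
      have hxeq : x = x0 + n • y := by rw [hy, add_neg_cancel_left]
      rw [smul_add, ← map_nsmul, hxeq, map_add, map_nsmul, hx0]
    have hmk : qmap n f (QuotientAddGroup.mk x) = QuotientAddGroup.mk (f x) := rfl
    rw [hmk, QuotientAddGroup.eq_zero_iff]
    exact this

lemma snakeE5 (hex : f.range = g.ker) (hg : Function.Surjective g) :
    (qmap n g).ker = (qmap n f).range := by
  ext q
  refine QuotientAddGroup.induction_on q ?_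
  intro r
  simp only [AddMonoidHom.mem_ker, AddMonoidHom.mem_range]
  constructor
  · intro h
    have hmk : qmap n g (QuotientAddGroup.mk r) = QuotientAddGroup.mk (g r) := rfl
    have : g r ∈ smulTop n S := by
      rw [← QuotientAddGroup.eq_zero_iff, ← hmk, h]
    obtain ⟨s, hs⟩ := this
    beta_reduce at hs
    obtain ⟨r', hr'⟩ := hg s
    have : r - n • r' ∈ f.range := by
      rw [hex, AddMonoidHom.mem_ker, map_sub, map_nsmul, hr', hs, sub_self]
    obtain ⟨x, hx⟩ := this
    refine ⟨QuotientAddGroup.mk x, ?_⟩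
    show QuotientAddGroup.mk (f x) = QuotientAddGroup.mk r
    rw [QuotientAddGroup.eq]
    exact ⟨r', show n • r' = -(f x) + r by rw [hx, neg_sub, sub_add_cancel]⟩
  · rintro ⟨q', hq⟩
    rw [← hq]
    refine QuotientAddGroup.induction_on q' ?_
    intro x
    show QuotientAddGroup.mk (g (f x)) = 0
    have : g (f x) = 0 := by
      have : f x ∈ g.ker := by rw [← hex]; exact ⟨x, rfl⟩
      exact this
    rw [this]
    rfl

lemma snakeE6 (hg : Function.Surjective g) : (qmap n g).range = ⊤ := by
  rw [AddSubgroup.eq_top_iff']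
  intro q
  refine QuotientAddGroup.induction_on q ?_
  intro s
  obtain ⟨r, hr⟩ := hg s
  exact ⟨QuotientAddGroup.mk r, by rw [show qmap n g (QuotientAddGroup.mk r) = QuotientAddGroup.mk (g r) from rfl, hr]⟩

end SnakeExact

/-- for a short exact sequence `0 → F → R → S → 0` with `F` finite, the ratio
`|n-torsion|/|mod-n quotient|` is multiplicative, the ratio for `F` is 1, and hence the ratios
for `R` and `S` coincide (stated multiplicatively). -/
theorem stmt_4 {F R S : Type} [AddCommGroup F] [AddCommGroup R] [AddCommGroup S]
    [Finite F] (f : F →+ R) (g : R →+ S)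
    (hf : Function.Injective f) (hg : Function.Surjective g) (hex : f.range = g.ker)
    (n : ℕ) (hn : 0 < n)
    (h1 : Finite (nTorsion n R)) (h2 : Finite (R ⧸ smulTop n R))
    (h3 : Finite (nTorsion n S)) (h4 : Finite (S ⧸ smulTop n S)) :
    Nat.card (nTorsion n R) * Nat.card (S ⧸ smulTop n S) * Nat.card (F ⧸ smulTop n F)
        = Nat.card (nTorsion n S) * Nat.card (nTorsion n F) * Nat.card (R ⧸ smulTop n R) ∧
    Nat.card (nTorsion n F) = Nat.card (F ⧸ smulTop n F) ∧
    Nat.card (nTorsion n R) * Nat.card (S ⧸ smulTop n S)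
        = Nat.card (nTorsion n S) * Nat.card (R ⧸ smulTop n R) := by
  classical
  haveI : Finite (nTorsion n F) := Subtype.finite
  haveI : Finite (F ⧸ smulTop n F) := Quotient.finite _
  -- exactness
  have e1 := snakeE1 f n hf
  have e2 := snakeE2 f g n hf hex
  have e3 := snakeE3 f g n hf hex hg
  have e4 := snakeE4 f g n hf hex hg
  have e5 := snakeE5 f g n hex hg
  have e6 := snakeE6 g n hg
  -- counting
  have hF := card_eq_range_mul_ker (tmap n f)
  have hR := card_eq_range_mul_ker (tmap n g)
  have hS := card_eq_range_mul_ker (snakeδHom f g n hf hex hg)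
  have hqF := card_eq_range_mul_ker (qmap n f)
  have hqR := card_eq_range_mul_ker (qmap n g)
  rw [e1, AddSubgroup.card_bot, mul_one] at hF
  rw [e2] at hR
  rw [e3] at hS
  rw [e4] at hqF
  rw [e5] at hqR
  have hqS : Nat.card (S ⧸ smulTop n S) = Nat.card (qmap (A := R) n g).range := by
    rw [e6, AddSubgroup.card_top]
  -- part 1
  have main : Nat.card (nTorsion n R) * Nat.card (S ⧸ smulTop n S) * Nat.card (F ⧸ smulTop n F)
      = Nat.card (nTorsion n S) * Nat.card (nTorsion n F) * Nat.card (R ⧸ smulTop n R) := by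
    rw [hR, hqS, hqF, hS, hF, hqR]
    ring
  -- part 2
  have part2 : Nat.card (nTorsion n F) = Nat.card (F ⧸ smulTop n F) := by
    let μ : F →+ F := ⟨⟨fun x => n • x, smul_zero n⟩, fun a b => smul_add n a b⟩
    have hkμ : μ.ker = nTorsion n F := by ext x; exact Iff.rfl
    have hrμ : μ.range = smulTop n F := by ext x; exact Iff.rfl
    have hμ := card_eq_range_mul_ker μ
    rw [hkμ, hrμ] at hμ
    have hlag := AddSubgroup.card_eq_card_quotient_mul_card_addSubgroup (smulTop n F)
    have hpos : 0 < Nat.card (smulTop n F) := Nat.card_pos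
    apply Nat.eq_of_mul_eq_mul_left hpos
    rw [← hμ, hlag, mul_comm]
  -- part 3
  refine ⟨main, part2, ?_⟩
  have hqFpos : 0 < Nat.card (F ⧸ smulTop n F) := Nat.card_pos
  apply Nat.eq_of_mul_eq_mul_right hqFpos
  calc Nat.card (nTorsion n R) * Nat.card (S ⧸ smulTop n S) * Nat.card (F ⧸ smulTop n F)
      = Nat.card (nTorsion n S) * Nat.card (nTorsion n F) * Nat.card (R ⧸ smulTop n R) := main
    _ = Nat.card (nTorsion n S) * Nat.card (R ⧸ smulTop n R) * Nat.card (F ⧸ smulTop n F) := by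
        rw [part2]; ring
end

section
/- Let f : M → N be a homomorphism of abelian groups with finite kernel and finite cokernel, and suppose for a positive integer n that the n-torsion subgroups and mod-n quotients of M and N are finite. Then |{x∈M : n•x=0}| / |M/nM| = |{x∈N : n•x=0}| / |N/nN|. -/
section Aux

variable {A B : Type*} [AddCommGroup A] [AddCommGroup B] (n : ℕ)

lemma mem_nTorsion {x : A} : x ∈ nTorsion n A ↔ n • x = 0 := Iff.rfl
lemma mem_smulTop {x : A} : x ∈ smulTop n A ↔ ∃ y : A, n • y = x := Iff.rfl

end Aux

section Snake

variable {B : Type*} [AddCommGroup B] (A : AddSubgroup B) (n : ℕ)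

/-- inclusion A[n] → B[n] -/
def t1 : nTorsion n A →+ nTorsion n B where
  toFun x := ⟨x.1.1, by
    have := x.2
    rw [mem_nTorsion] at this ⊢
    exact congrArg Subtype.val this⟩
  map_zero' := rfl
  map_add' x y := rfl

/-- B[n] → C[n] -/
def t2 : nTorsion n B →+ nTorsion n (B ⧸ A) where
  toFun x := ⟨QuotientAddGroup.mk x.1, by
    rw [mem_nTorsion, ← QuotientAddGroup.mk_nsmul, x.2, QuotientAddGroup.mk_zero]⟩
  map_zero' := rfl
  map_add' x y := rfl

lemma nsmul_out_mem (c : nTorsion n (B ⧸ A)) : n • (Quotient.out c.1) ∈ A := by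
  rw [← QuotientAddGroup.eq_zero_iff, QuotientAddGroup.mk_nsmul]
  have h : (QuotientAddGroup.mk (Quotient.out c.1) : B ⧸ A) = c.1 := Quotient.out_eq' c.1
  rw [h]
  exact c.2

/-- the connecting function C[n] → A/nA -/
noncomputable def deltaFun (c : nTorsion n (B ⧸ A)) : ↥A ⧸ smulTop n ↥A :=
  QuotientAddGroup.mk ⟨n • (Quotient.out c.1), nsmul_out_mem A n c⟩

lemma deltaFun_mk (b : B) (h : (QuotientAddGroup.mk b : B ⧸ A) ∈ nTorsion n (B ⧸ A))
    (h2 : n • b ∈ A) :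
    deltaFun A n ⟨QuotientAddGroup.mk b, h⟩ = QuotientAddGroup.mk ⟨n • b, h2⟩ := by
  unfold deltaFun
  rw [QuotientAddGroup.eq_iff_sub_mem]
  have hd : (Quotient.out (QuotientAddGroup.mk b : B ⧸ A)) - b ∈ A := by
    rw [← QuotientAddGroup.eq_iff_sub_mem]
    exact Quotient.out_eq' _
  refine ⟨⟨_, hd⟩, ?_⟩
  apply Subtype.ext
  show n • (Quotient.out (QuotientAddGroup.mk b : B ⧸ A) - b) = _
  rw [smul_sub]
  rfl

lemma exists_rep (c : nTorsion n (B ⧸ A)) :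
    ∃ (b : B) (h : (QuotientAddGroup.mk b : B ⧸ A) ∈ nTorsion n (B ⧸ A)),
      c = ⟨QuotientAddGroup.mk b, h⟩ := by
  have h : (QuotientAddGroup.mk (Quotient.out c.1) : B ⧸ A) = c.1 := Quotient.out_eq' c.1
  refine ⟨Quotient.out c.1, ?_, ?_⟩
  · rw [h]; exact c.2
  · apply Subtype.ext
    exact h.symm

lemma nsmul_mem_of_mk_torsion (b : B)
    (h : (QuotientAddGroup.mk b : B ⧸ A) ∈ nTorsion n (B ⧸ A)) : n • b ∈ A := by
  rw [← QuotientAddGroup.eq_zero_iff]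
  rw [QuotientAddGroup.mk_nsmul]
  exact h

/-- connecting hom -/
noncomputable def t3 : nTorsion n (B ⧸ A) →+ ↥A ⧸ smulTop n ↥A :=
  AddMonoidHom.mk' (deltaFun A n) (by
    intro c1 c2
    obtain ⟨b1, h1, rfl⟩ := exists_rep A n c1
    obtain ⟨b2, h2, rfl⟩ := exists_rep A n c2
    have hmem : (QuotientAddGroup.mk (b1 + b2) : B ⧸ A) ∈ nTorsion n (B ⧸ A) := by
      rw [QuotientAddGroup.mk_add]; exact (nTorsion n (B ⧸ A)).add_mem h1 h2
    have hsum : (⟨QuotientAddGroup.mk b1, h1⟩ + ⟨QuotientAddGroup.mk b2, h2⟩ :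
        nTorsion n (B ⧸ A)) = ⟨QuotientAddGroup.mk (b1 + b2), hmem⟩ := by
      apply Subtype.ext
      rfl
    rw [hsum, deltaFun_mk A n _ _ (nsmul_mem_of_mk_torsion A n _ hmem),
      deltaFun_mk A n _ _ (nsmul_mem_of_mk_torsion A n _ h1),
      deltaFun_mk A n _ _ (nsmul_mem_of_mk_torsion A n _ h2)]
    rw [← QuotientAddGroup.mk_add]
    congr 1
    apply Subtype.ext
    exact smul_add n b1 b2)

/-- A/nA → B/nB -/
def t4 : (↥A ⧸ smulTop n ↥A) →+ B ⧸ smulTop n B :=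
  QuotientAddGroup.map _ _ A.subtype (by
    rintro _ ⟨a, rfl⟩
    exact ⟨a.1, rfl⟩)

/-- B/nB → C/nC -/
def t5 : (B ⧸ smulTop n B) →+ (B ⧸ A) ⧸ smulTop n (B ⧸ A) :=
  QuotientAddGroup.map _ _ (QuotientAddGroup.mk' A) (by
    rintro _ ⟨b, rfl⟩
    exact ⟨QuotientAddGroup.mk b, (QuotientAddGroup.mk_nsmul _ _ _).symm⟩)

end Snake

section Exactness

variable {B : Type*} [AddCommGroup B] (A : AddSubgroup B) (n : ℕ)

lemma t1_inj : Function.Injective (t1 A n) := by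
  intro x y h
  apply Subtype.ext
  apply Subtype.ext
  exact congrArg (fun z : nTorsion n B => z.1) h

lemma ker_t2 : (t2 A n).ker = (t1 A n).range := by
  ext x
  rw [AddMonoidHom.mem_ker, AddMonoidHom.mem_range]
  constructor
  · intro h
    have hx : x.1 ∈ A := by
      rw [← QuotientAddGroup.eq_zero_iff]
      exact congrArg (fun z : nTorsion n (B ⧸ A) => z.1) h
    refine ⟨⟨⟨x.1, hx⟩, ?_⟩, ?_⟩
    · rw [mem_nTorsion]
      apply Subtype.ext
      exact x.2
    · apply Subtype.ext; rfl
  · rintro ⟨y, rfl⟩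
    apply Subtype.ext
    show (QuotientAddGroup.mk y.1.1 : B ⧸ A) = 0
    rw [QuotientAddGroup.eq_zero_iff]
    exact y.1.2

lemma ker_t3 : (t3 A n).ker = (t2 A n).range := by
  ext c
  rw [AddMonoidHom.mem_ker, AddMonoidHom.mem_range]
  obtain ⟨b, h, rfl⟩ := exists_rep A n c
  have hb : n • b ∈ A := nsmul_mem_of_mk_torsion A n b h
  have hd : t3 A n ⟨QuotientAddGroup.mk b, h⟩ = QuotientAddGroup.mk ⟨n • b, hb⟩ :=
    deltaFun_mk A n b h hb
  rw [hd]
  constructor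
  · intro h0
    rw [QuotientAddGroup.eq_zero_iff] at h0
    obtain ⟨a, ha⟩ := h0
    have h2 : n • (a : B) = n • b := congrArg Subtype.val ha
    have hab : n • (b - a.1) = 0 := by rw [smul_sub, ← h2, sub_self]
    refine ⟨⟨b - a.1, hab⟩, ?_⟩
    apply Subtype.ext
    show (QuotientAddGroup.mk (b - a.1) : B ⧸ A) = QuotientAddGroup.mk b
    rw [QuotientAddGroup.eq_iff_sub_mem]
    simpa using A.neg_mem a.2
  · rintro ⟨y, hy⟩
    have hyb : y.1 - b ∈ A := by
      rw [← QuotientAddGroup.eq_iff_sub_mem]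
      exact congrArg (fun z : nTorsion n (B ⧸ A) => z.1) hy
    rw [QuotientAddGroup.eq_zero_iff]
    refine ⟨⟨b - y.1, by simpa using A.neg_mem hyb⟩, ?_⟩
    apply Subtype.ext
    show n • (b - y.1) = n • b
    rw [smul_sub, y.2, sub_zero]

lemma ker_t4 : (t4 A n).ker = (t3 A n).range := by
  refine le_antisymm ?_ ?_
  · intro x h0
    rw [AddMonoidHom.mem_ker] at h0
    rw [AddMonoidHom.mem_range]
    obtain ⟨a, rfl⟩ := QuotientAddGroup.mk_surjective x
    have : (QuotientAddGroup.mk a.1 : B ⧸ smulTop n B) = 0 := h0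
    rw [QuotientAddGroup.eq_zero_iff] at this
    obtain ⟨y, hy⟩ := this
    have hy' : n • y = a.1 := hy
    have hny : n • y ∈ A := by rw [hy']; exact a.2
    have hc : (QuotientAddGroup.mk y : B ⧸ A) ∈ nTorsion n (B ⧸ A) := by
      rw [mem_nTorsion, ← QuotientAddGroup.mk_nsmul, hy', QuotientAddGroup.eq_zero_iff]
      exact a.2
    refine ⟨⟨QuotientAddGroup.mk y, hc⟩, ?_⟩
    rw [show t3 A n ⟨QuotientAddGroup.mk y, hc⟩
        = QuotientAddGroup.mk ⟨n • y, hny⟩ from deltaFun_mk A n y hc hny]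
    congr 1
    exact Subtype.ext hy'
  · rintro _ ⟨c, rfl⟩
    rw [AddMonoidHom.mem_ker]
    obtain ⟨b, h, rfl⟩ := exists_rep A n c
    rw [show t3 A n ⟨QuotientAddGroup.mk b, h⟩
        = QuotientAddGroup.mk ⟨n • b, nsmul_mem_of_mk_torsion A n b h⟩ from
      deltaFun_mk A n b h _]
    show (QuotientAddGroup.mk (n • b) : B ⧸ smulTop n B) = 0
    rw [QuotientAddGroup.eq_zero_iff]
    exact ⟨b, rfl⟩

lemma ker_t5 : (t5 A n).ker = (t4 A n).range := by
  refine le_antisymm ?_ ?_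
  · intro x h0
    rw [AddMonoidHom.mem_ker] at h0
    rw [AddMonoidHom.mem_range]
    obtain ⟨b, rfl⟩ := QuotientAddGroup.mk_surjective x
    have : (QuotientAddGroup.mk (QuotientAddGroup.mk b : B ⧸ A)
        : (B ⧸ A) ⧸ smulTop n (B ⧸ A)) = 0 := h0
    rw [QuotientAddGroup.eq_zero_iff] at this
    obtain ⟨c, hc⟩ := this
    obtain ⟨b', rfl⟩ := QuotientAddGroup.mk_surjective c
    have hc' : (QuotientAddGroup.mk (n • b') : B ⧸ A) = QuotientAddGroup.mk b := by
      rw [QuotientAddGroup.mk_nsmul]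
      exact hc
    have hmem : n • b' - b ∈ A := by
      rw [← QuotientAddGroup.eq_iff_sub_mem]
      exact hc'
    refine ⟨QuotientAddGroup.mk ⟨b - n • b', by simpa using A.neg_mem hmem⟩, ?_⟩
    show (QuotientAddGroup.mk (b - n • b') : B ⧸ smulTop n B) = QuotientAddGroup.mk b
    rw [QuotientAddGroup.eq_iff_sub_mem]
    refine ⟨-b', ?_⟩
    show n • (-b') = b - n • b' - b
    rw [smul_neg]
    abel
  · rintro _ ⟨y, rfl⟩
    rw [AddMonoidHom.mem_ker]
    obtain ⟨a, rfl⟩ := QuotientAddGroup.mk_surjective y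
    show (QuotientAddGroup.mk ((QuotientAddGroup.mk' A) a.1)
        : (B ⧸ A) ⧸ smulTop n (B ⧸ A)) = 0
    rw [QuotientAddGroup.eq_zero_iff]
    have h : (QuotientAddGroup.mk' A) a.1 = 0 := by
      rw [QuotientAddGroup.mk'_apply, QuotientAddGroup.eq_zero_iff]
      exact a.2
    rw [h]
    exact (smulTop n (B ⧸ A)).zero_mem

lemma t5_surj : Function.Surjective (t5 A n) := by
  intro x
  obtain ⟨c, rfl⟩ := QuotientAddGroup.mk_surjective x
  obtain ⟨b, rfl⟩ := QuotientAddGroup.mk_surjective c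
  exact ⟨QuotientAddGroup.mk b, rfl⟩

end Exactness

section Count2

variable {X Y : Type*} [AddCommGroup X] [AddCommGroup Y] (n : ℕ)

def nsmulHom (n : ℕ) (A : Type*) [AddCommGroup A] : A →+ A where
  toFun := fun x => n • x
  map_zero' := smul_zero n
  map_add' := smul_add n

lemma nTorsion_eq_ker : nTorsion n X = (nsmulHom n X).ker := by
  ext x; simp [nTorsion, nsmulHom, AddMonoidHom.mem_ker, AddSubgroup.mem_mk]

lemma smulTop_eq_range : smulTop n X = (nsmulHom n X).range := by
  ext x; simp [smulTop, nsmulHom, AddMonoidHom.mem_range, AddSubgroup.mem_mk]; exact Iff.rfl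

lemma card_eq_card_ker_mul_card_range [Finite X] (f : X →+ Y) :
    Nat.card X = Nat.card f.ker * Nat.card f.range := by
  rw [AddSubgroup.card_eq_card_quotient_mul_card_addSubgroup f.ker,
    Nat.card_congr (QuotientAddGroup.quotientKerEquivRange f).toEquiv, mul_comm]

lemma chi_finite [Finite X] : Nat.card (nTorsion n X) = Nat.card (X ⧸ smulTop n X) := by
  have h1 := card_eq_card_ker_mul_card_range (f := nsmulHom n X)
  have h2 := AddSubgroup.card_eq_card_quotient_mul_card_addSubgroup ((nsmulHom n X).range)
  rw [nTorsion_eq_ker, smulTop_eq_range]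
  have hpos : 0 < Nat.card (nsmulHom n X).range := Nat.card_pos
  exact Nat.eq_of_mul_eq_mul_right hpos (by rw [← h1, h2])

/-- equiv of torsion subgroups induced by an AddEquiv -/
def nTorsionCongr (e : X ≃+ Y) : nTorsion n X ≃ nTorsion n Y where
  toFun x := ⟨e x.1, by rw [mem_nTorsion, ← map_nsmul, x.2, map_zero]⟩
  invFun y := ⟨e.symm y.1, by rw [mem_nTorsion, ← map_nsmul, y.2, map_zero]⟩
  left_inv x := Subtype.ext (e.symm_apply_apply _)
  right_inv y := Subtype.ext (e.apply_symm_apply _)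

lemma smulTop_map (e : X ≃+ Y) : (smulTop n X).map e.toAddMonoidHom = smulTop n Y := by
  ext y
  rw [AddSubgroup.mem_map]
  constructor
  · rintro ⟨x, ⟨w, rfl⟩, rfl⟩
    exact ⟨e w, (map_nsmul e.toAddMonoidHom n w).symm⟩
  · rintro ⟨w, rfl⟩
    refine ⟨n • e.symm w, ⟨e.symm w, rfl⟩, ?_⟩
    show e (n • e.symm w) = n • w
    rw [map_nsmul, e.apply_symm_apply]

/-- equiv of mod-n quotients induced by an AddEquiv -/
def quotCongr (e : X ≃+ Y) : (X ⧸ smulTop n X) ≃ (Y ⧸ smulTop n Y) :=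
  (QuotientAddGroup.congr (smulTop n X) (smulTop n Y) e (smulTop_map n e)).toEquiv

end Count2

/-- the snake-lemma counting identity for a subgroup A ≤ B -/
lemma snake_count {B : Type*} [AddCommGroup B] (A : AddSubgroup B) (n : ℕ)
    [Finite (nTorsion n ↥A)] [Finite (nTorsion n B)] [Finite (nTorsion n (B ⧸ A))]
    [Finite (↥A ⧸ smulTop n ↥A)] [Finite (B ⧸ smulTop n B)]
    [Finite ((B ⧸ A) ⧸ smulTop n (B ⧸ A))] :
    Nat.card (nTorsion n ↥A) * Nat.card (nTorsion n (B ⧸ A)) * Nat.card (B ⧸ smulTop n B)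
      = Nat.card (nTorsion n B) * Nat.card (↥A ⧸ smulTop n ↥A)
        * Nat.card ((B ⧸ A) ⧸ smulTop n (B ⧸ A)) := by
  have h1 : Nat.card (nTorsion n ↥A) = Nat.card (t1 A n).range :=
    Nat.card_congr (AddMonoidHom.ofInjective (t1_inj A n)).toEquiv
  have h2 := card_eq_card_ker_mul_card_range (t2 A n)
  have h3 := card_eq_card_ker_mul_card_range (t3 A n)
  have h4 := card_eq_card_ker_mul_card_range (t4 A n)
  have h5 := card_eq_card_ker_mul_card_range (t5 A n)
  rw [ker_t2] at h2
  rw [ker_t3] at h3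
  rw [ker_t4] at h4
  rw [ker_t5] at h5
  have h6 : Nat.card ((B ⧸ A) ⧸ smulTop n (B ⧸ A)) = Nat.card (t5 A n).range := by
    rw [AddMonoidHom.range_eq_top_of_surjective _ (t5_surj A n)]
    exact (AddSubgroup.card_top).symm
  rw [h1, h2, h3, h4, h5, h6]
  ring

/-- a homomorphism with finite kernel and cokernel preserves the ratio of the size
of the `n`-torsion to the size of the mod-`n` quotient (stated multiplicatively). -/
theorem stmt_13 {M N : Type} [AddCommGroup M] [AddCommGroup N] (f : M →+ N)
    (hker : Finite f.ker) (hcoker : Finite (N ⧸ f.range))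
    (n : ℕ) (hn : 0 < n)
    (h1 : Finite (nTorsion n M)) (h2 : Finite (M ⧸ smulTop n M))
    (h3 : Finite (nTorsion n N)) (h4 : Finite (N ⧸ smulTop n N)) :
    Nat.card (nTorsion n M) * Nat.card (N ⧸ smulTop n N)
      = Nat.card (nTorsion n N) * Nat.card (M ⧸ smulTop n M) := by
  classical
  haveI := hker; haveI := hcoker; haveI := h1; haveI := h2; haveI := h3; haveI := h4
  let e : (M ⧸ f.ker) ≃+ f.range := QuotientAddGroup.quotientKerEquivRange f
  haveI fIt : Finite (nTorsion n ↥f.range) := Finite.of_injective _ (t1_inj f.range n)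
  have hcond : smulTop n M ≤ (smulTop n ↥f.range).comap f.rangeRestrict := by
    rintro _ ⟨m, rfl⟩
    exact ⟨f.rangeRestrict m, (map_nsmul f.rangeRestrict n m).symm⟩
  have hsurj : Function.Surjective
      (QuotientAddGroup.map (smulTop n M) (smulTop n ↥f.range) f.rangeRestrict hcond) := by
    intro x
    obtain ⟨y, rfl⟩ := QuotientAddGroup.mk_surjective x
    obtain ⟨m, rfl⟩ := f.rangeRestrict_surjective y
    exact ⟨QuotientAddGroup.mk m, rfl⟩
  haveI fIq : Finite (↥f.range ⧸ smulTop n ↥f.range) := Finite.of_surjective _ hsurj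
  haveI : Finite (nTorsion n (M ⧸ f.ker)) := Finite.of_equiv _ (nTorsionCongr n e).symm
  haveI : Finite ((M ⧸ f.ker) ⧸ smulTop n (M ⧸ f.ker)) :=
    Finite.of_equiv _ (quotCongr n e).symm
  haveI : Finite (nTorsion n ↥f.ker) := Subtype.finite
  haveI : Finite (↥f.ker ⧸ smulTop n ↥f.ker) := Quotient.finite _
  haveI : Finite (nTorsion n (N ⧸ f.range)) := Subtype.finite
  haveI : Finite ((N ⧸ f.range) ⧸ smulTop n (N ⧸ f.range)) := Quotient.finite _
  have s1 := snake_count f.ker n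
  have s2 := snake_count f.range n
  have hKchi : Nat.card (nTorsion n ↥f.ker) = Nat.card (↥f.ker ⧸ smulTop n ↥f.ker) :=
    chi_finite n
  have hCchi : Nat.card (nTorsion n (N ⧸ f.range))
      = Nat.card ((N ⧸ f.range) ⧸ smulTop n (N ⧸ f.range)) := chi_finite n
  have hA : Nat.card (nTorsion n (M ⧸ f.ker)) = Nat.card (nTorsion n ↥f.range) :=
    Nat.card_congr (nTorsionCongr n e)
  have hB : Nat.card ((M ⧸ f.ker) ⧸ smulTop n (M ⧸ f.ker))
      = Nat.card (↥f.range ⧸ smulTop n ↥f.range) := Nat.card_congr (quotCongr n e)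
  rw [hKchi, hA, hB] at s1
  rw [hCchi] at s2
  -- s1 : cKq * cIt * cMq = cMt * cKq * cIq
  -- s2 : cIt * cCq * cNq = cNt * cIq * cCq
  have e1 : Nat.card (nTorsion n ↥f.range) * Nat.card (M ⧸ smulTop n M)
      = Nat.card (nTorsion n M) * Nat.card (↥f.range ⧸ smulTop n ↥f.range) := by
    apply Nat.eq_of_mul_eq_mul_left
      (show 0 < Nat.card (↥f.ker ⧸ smulTop n ↥f.ker) from Nat.card_pos)
    calc Nat.card (↥f.ker ⧸ smulTop n ↥f.ker)
          * (Nat.card (nTorsion n ↥f.range) * Nat.card (M ⧸ smulTop n M))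
        = Nat.card (↥f.ker ⧸ smulTop n ↥f.ker) * Nat.card (nTorsion n ↥f.range)
          * Nat.card (M ⧸ smulTop n M) := by ring
      _ = Nat.card (nTorsion n M) * Nat.card (↥f.ker ⧸ smulTop n ↥f.ker)
          * Nat.card (↥f.range ⧸ smulTop n ↥f.range) := s1
      _ = _ := by ring
  have e2 : Nat.card (nTorsion n ↥f.range) * Nat.card (N ⧸ smulTop n N)
      = Nat.card (nTorsion n N) * Nat.card (↥f.range ⧸ smulTop n ↥f.range) := by
    apply Nat.eq_of_mul_eq_mul_right
      (show 0 < Nat.card ((N ⧸ f.range) ⧸ smulTop n (N ⧸ f.range)) from Nat.card_pos)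
    calc Nat.card (nTorsion n ↥f.range) * Nat.card (N ⧸ smulTop n N)
          * Nat.card ((N ⧸ f.range) ⧸ smulTop n (N ⧸ f.range))
        = Nat.card (nTorsion n ↥f.range) * Nat.card ((N ⧸ f.range) ⧸ smulTop n (N ⧸ f.range))
          * Nat.card (N ⧸ smulTop n N) := by ring
      _ = Nat.card (nTorsion n N) * Nat.card (↥f.range ⧸ smulTop n ↥f.range)
          * Nat.card ((N ⧸ f.range) ⧸ smulTop n (N ⧸ f.range)) := s2
  apply Nat.eq_of_mul_eq_mul_left
    (show 0 < Nat.card (↥f.range ⧸ smulTop n ↥f.range) from Nat.card_pos)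
  calc Nat.card (↥f.range ⧸ smulTop n ↥f.range)
        * (Nat.card (nTorsion n M) * Nat.card (N ⧸ smulTop n N))
      = (Nat.card (nTorsion n M) * Nat.card (↥f.range ⧸ smulTop n ↥f.range))
        * Nat.card (N ⧸ smulTop n N) := by ring
    _ = (Nat.card (nTorsion n ↥f.range) * Nat.card (M ⧸ smulTop n M))
        * Nat.card (N ⧸ smulTop n N) := by rw [e1]
    _ = (Nat.card (nTorsion n ↥f.range) * Nat.card (N ⧸ smulTop n N))
        * Nat.card (M ⧸ smulTop n M) := by ring
    _ = (Nat.card (nTorsion n N) * Nat.card (↥f.range ⧸ smulTop n ↥f.range))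
        * Nat.card (M ⧸ smulTop n M) := by rw [e2]
    _ = Nat.card (↥f.range ⧸ smulTop n ↥f.range)
        * (Nat.card (nTorsion n N) * Nat.card (M ⧸ smulTop n M)) := by ring
end
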